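/- arXiv:2507.06428 — 2 statements merged into one kernel-verified Lean document; each statement's English description precedes it below -/
import Mathlib

section
/- Let Q ∈ C²(ℝ^d) be given by Q(x) = k‖x‖² where k = (√(q²γ² + 4pqξ²) − γq)/(2ξ²) with p, q, ξ, γ > 0, and for each x let H(a) = Σ_{i=1}^d [∂²_i Q(x)(1 + εx_i a_i)² + ξ ∂_i Q(x) a_i] + q‖a‖² + f̃(x), where f̃(x) = γk‖x‖² + Σ_i k²(ξ+2ε)² x_i² / (q + 2kε²x_i²) − 2kd. Then the infimum over a ∈ ℝ^d of H(a) is attained at a_i* = −x_i k(ξ + 2ε)/(q + 2kε²x_i²), and inf_a H(a) − γQ(x) = 0 for all x ∈ ℝ^d. -/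
open Finset

lemma coord_min (k q ξ ε X t : ℝ) (hk : 0 ≤ k) (hq : 0 < q) :
    (2 * k) * (1 + ε * X * (-X * k * (ξ + 2 * ε) / (q + 2 * k * ε ^ 2 * X ^ 2))) ^ 2
      + ξ * (2 * k * X) * (-X * k * (ξ + 2 * ε) / (q + 2 * k * ε ^ 2 * X ^ 2))
      + q * (-X * k * (ξ + 2 * ε) / (q + 2 * k * ε ^ 2 * X ^ 2)) ^ 2
      ≤ (2 * k) * (1 + ε * X * t) ^ 2 + ξ * (2 * k * X) * t + q * t ^ 2 := by
  have hD : 0 < q + 2 * k * ε ^ 2 * X ^ 2 := by positivity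
  set D := q + 2 * k * ε ^ 2 * X ^ 2 with hDdef
  set s := -X * k * (ξ + 2 * ε) / D with hs
  have key : (2 * k) * (1 + ε * X * t) ^ 2 + ξ * (2 * k * X) * t + q * t ^ 2
      - ((2 * k) * (1 + ε * X * s) ^ 2 + ξ * (2 * k * X) * s + q * s ^ 2)
      = D * (t - s) ^ 2 := by
    rw [hs, hDdef]
    field_simp
    ring
  nlinarith [mul_nonneg hD.le (sq_nonneg (t - s))]

lemma coord_val (k q ξ ε X : ℝ) (hk : 0 ≤ k) (hq : 0 < q) :
    (2 * k) * (1 + ε * X * (-X * k * (ξ + 2 * ε) / (q + 2 * k * ε ^ 2 * X ^ 2))) ^ 2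
      + ξ * (2 * k * X) * (-X * k * (ξ + 2 * ε) / (q + 2 * k * ε ^ 2 * X ^ 2))
      + q * (-X * k * (ξ + 2 * ε) / (q + 2 * k * ε ^ 2 * X ^ 2)) ^ 2
      + k ^ 2 * (ξ + 2 * ε) ^ 2 * X ^ 2 / (q + 2 * k * ε ^ 2 * X ^ 2) - 2 * k = 0 := by
  have hD : 0 < q + 2 * k * ε ^ 2 * X ^ 2 := by positivity
  field_simp
  ring

theorem lqr_closed_form_solution (d : ℕ) (p q ξ γ ε : ℝ)
    (hp : 0 < p) (hq : 0 < q) (hξ : 0 < ξ) (hγ : 0 < γ)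
    (x : Fin d → ℝ) :
    -- Q(x) = k‖x‖², ∂ᵢQ(x) = 2kxᵢ, ∂²ᵢQ(x) = 2k
    let k : ℝ := (Real.sqrt (q ^ 2 * γ ^ 2 + 4 * p * q * ξ ^ 2) - γ * q) / (2 * ξ ^ 2)
    let ftil : ℝ := γ * k * (∑ i, (x i) ^ 2)
        + (∑ i, k ^ 2 * (ξ + 2 * ε) ^ 2 * (x i) ^ 2 / (q + 2 * k * ε ^ 2 * (x i) ^ 2))
        - 2 * k * d
    let H : (Fin d → ℝ) → ℝ := fun a =>
      (∑ i, ((2 * k) * (1 + ε * x i * a i) ^ 2 + ξ * (2 * k * x i) * a i))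
        + q * (∑ i, (a i) ^ 2) + ftil
    let astar : Fin d → ℝ := fun i =>
      -(x i) * k * (ξ + 2 * ε) / (q + 2 * k * ε ^ 2 * (x i) ^ 2)
    (∀ a : Fin d → ℝ, H astar ≤ H a) ∧
      H astar - γ * (k * ∑ i, (x i) ^ 2) = 0 := by
  intro k ftil H astar
  have hk : 0 ≤ k := by
    have h1 : γ * q ≤ Real.sqrt (q ^ 2 * γ ^ 2 + 4 * p * q * ξ ^ 2) := by
      rw [show γ * q = Real.sqrt ((γ * q) ^ 2) from (Real.sqrt_sq (by positivity)).symm]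
      apply Real.sqrt_le_sqrt
      have : 0 < 4 * p * q * ξ ^ 2 := by positivity
      nlinarith
    have h2 : (0:ℝ) < 2 * ξ ^ 2 := by positivity
    exact div_nonneg (by linarith) h2.le
  have hcomb : ∀ b : Fin d → ℝ,
      (∑ i, ((2 * k) * (1 + ε * x i * b i) ^ 2 + ξ * (2 * k * x i) * b i))
        + q * (∑ i, (b i) ^ 2)
      = ∑ i, ((2 * k) * (1 + ε * x i * b i) ^ 2 + ξ * (2 * k * x i) * b i
          + q * (b i) ^ 2) := by
    intro b
    rw [Finset.mul_sum, ← Finset.sum_add_distrib]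
  constructor
  · intro a
    show _ + _ + ftil ≤ _ + _ + ftil
    apply add_le_add_left
    rw [hcomb a, hcomb astar]
    apply Finset.sum_le_sum
    intro i _
    exact coord_min k q ξ ε (x i) (a i) hk hq
  · show (∑ i, ((2 * k) * (1 + ε * x i * astar i) ^ 2 + ξ * (2 * k * x i) * astar i))
        + q * (∑ i, (astar i) ^ 2) + ftil - γ * (k * ∑ i, (x i) ^ 2) = 0
    have hz : ∑ i, ((2 * k) * (1 + ε * x i * astar i) ^ 2 + ξ * (2 * k * x i) * astar i
        + q * (astar i) ^ 2
        + k ^ 2 * (ξ + 2 * ε) ^ 2 * (x i) ^ 2 / (q + 2 * k * ε ^ 2 * (x i) ^ 2)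
        - 2 * k) = 0 :=
      Finset.sum_eq_zero fun i _ => coord_val k q ξ ε (x i) hk hq
    have hexp : ∑ i, ((2 * k) * (1 + ε * x i * astar i) ^ 2 + ξ * (2 * k * x i) * astar i
        + q * (astar i) ^ 2
        + k ^ 2 * (ξ + 2 * ε) ^ 2 * (x i) ^ 2 / (q + 2 * k * ε ^ 2 * (x i) ^ 2)
        - 2 * k)
      = (∑ i, ((2 * k) * (1 + ε * x i * astar i) ^ 2 + ξ * (2 * k * x i) * astar i))
        + q * (∑ i, (astar i) ^ 2)
        + (∑ i, k ^ 2 * (ξ + 2 * ε) ^ 2 * (x i) ^ 2 / (q + 2 * k * ε ^ 2 * (x i) ^ 2))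
        - 2 * k * d := by
      rw [Finset.sum_sub_distrib, Finset.sum_add_distrib, Finset.sum_add_distrib,
        Finset.sum_const, card_univ, Fintype.card_fin, nsmul_eq_mul, Finset.mul_sum]
      ring
    rw [hexp] at hz
    show _ = (0:ℝ)
    simp only [ftil]
    linarith
end

section
/- Let σ ∈ C¹(ℝ), and for fixed x ∈ ℝ^d define ψ(h) = Σ_{i=1}^d Q(x + (h/√2) Φ_{·,i} + (h²/(2d)) b), where Q ∈ C²(ℝ^d), b ∈ ℝ^d, and Φ_{·,i} ∈ ℝ^d are the columns of a matrix Φ ∈ ℝ^{d×d}. Then ψ is twice differentiable at 0 and ψ''(0) = ⟨b, ∇Q(x)⟩ + (1/2) Tr(ΦΦᵀ Hess Q(x)). -/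
open Finset Matrix

noncomputable def pd {d : ℕ} (f : (Fin d → ℝ) → ℝ) (i : Fin d) (x : Fin d → ℝ) : ℝ :=
  fderiv ℝ f x (Pi.single i 1)

noncomputable def pd2 {d : ℕ} (f : (Fin d → ℝ) → ℝ) (i j : Fin d) (x : Fin d → ℝ) : ℝ :=
  fderiv ℝ (fun y => fderiv ℝ f y (Pi.single i 1)) x (Pi.single j 1)

theorem second_derivative_trick {d : ℕ} (hd : 0 < d)
    (Q : (Fin d → ℝ) → ℝ) (hQ : ContDiff ℝ 2 Q)
    (b : Fin d → ℝ) (Φ : Matrix (Fin d) (Fin d) ℝ) (x : Fin d → ℝ) :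
    let ψ : ℝ → ℝ := fun h =>
      ∑ i, Q (x + (h / Real.sqrt 2) • (fun j => Φ j i) + (h ^ 2 / (2 * d)) • b)
    DifferentiableAt ℝ (deriv ψ) 0 ∧
      deriv (deriv ψ) 0 =
        (∑ j, b j * pd Q j x)
          + (1 / 2) * (∑ i, ∑ j, (Φ * Φᵀ) i j * pd2 Q i j x) := by
  intro ψ
  have hQd : Differentiable ℝ Q := hQ.differentiable (by norm_num)
  set v : Fin d → (Fin d → ℝ) := fun i j => Φ j i with hv
  set G : Fin d → ℝ → (Fin d → ℝ) :=
    fun i h => x + (h / Real.sqrt 2) • v i + (h ^ 2 / (2 * d)) • b with hGdef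
  -- derivative of the curves
  have hGd : ∀ (i : Fin d) (h : ℝ), HasDerivAt (G i)
      ((Real.sqrt 2)⁻¹ • v i + (h / (d : ℝ)) • b) h := by
    intro i h
    have h1 : HasDerivAt (fun h : ℝ => h / Real.sqrt 2) (Real.sqrt 2)⁻¹ h := by
      simpa using (hasDerivAt_id h).div_const (Real.sqrt 2)
    have h2 : HasDerivAt (fun h : ℝ => h ^ 2 / (2 * (d : ℝ))) (h / (d : ℝ)) h := by
      have := (hasDerivAt_pow 2 h).div_const (2 * (d : ℝ))
      refine this.congr_deriv ?_
      push_cast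
      rw [pow_one, mul_div_mul_left h (d : ℝ) two_ne_zero]
    have := ((hasDerivAt_const h x).add (h1.smul_const (v i))).add (h2.smul_const b)
    rw [zero_add] at this
    exact this
  -- first derivative of ψ
  have hψ' : ∀ h : ℝ, HasDerivAt ψ
      (∑ i, fderiv ℝ Q (G i h) ((Real.sqrt 2)⁻¹ • v i + (h / (d : ℝ)) • b)) h := by
    intro h
    apply HasDerivAt.fun_sum
    intro i _
    exact ((hQd (G i h)).hasFDerivAt.comp_hasDerivAt h (hGd i h))
  have hderivψ : deriv ψ =
      fun h => ∑ i, fderiv ℝ Q (G i h) ((Real.sqrt 2)⁻¹ • v i + (h / (d : ℝ)) • b) :=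
    funext fun h => (hψ' h).deriv
  -- second fderiv data
  set D : (Fin d → ℝ) →L[ℝ] ((Fin d → ℝ) →L[ℝ] ℝ) := fderiv ℝ (fderiv ℝ Q) x with hDdef
  have hF1 : ContDiff ℝ 1 (fderiv ℝ Q) := hQ.fderiv_right (by norm_num)
  have hD : HasFDerivAt (fderiv ℝ Q) D x := (hF1.differentiable one_ne_zero x).hasFDerivAt
  have hG0 : ∀ i, G i 0 = x := by
    intro i; simp [hGdef]
  set u : Fin d → (Fin d → ℝ) := fun i => (Real.sqrt 2)⁻¹ • v i with hu
  -- second derivative of each summand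
  have hsum : ∀ i, HasDerivAt
      (fun h => fderiv ℝ Q (G i h) ((Real.sqrt 2)⁻¹ • v i + (h / (d : ℝ)) • b))
      (D (u i) (u i) + fderiv ℝ Q x ((d : ℝ)⁻¹ • b)) 0 := by
    intro i
    have hA : HasDerivAt (fun h => fderiv ℝ Q (G i h)) (D (u i)) 0 := by
      have h0 : HasDerivAt (G i) (u i) 0 := by
        have := hGd i 0
        simpa [hu] using this
      have hDx : HasFDerivAt (fderiv ℝ Q) D (G i 0) := by rw [hG0 i]; exact hD
      have := hDx.comp_hasDerivAt 0 h0
      exact this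
    have hw : HasDerivAt (fun h : ℝ => (Real.sqrt 2)⁻¹ • v i + (h / (d : ℝ)) • b)
        ((d : ℝ)⁻¹ • b) 0 := by
      have h1 : HasDerivAt (fun h : ℝ => h / (d : ℝ)) ((d : ℝ)⁻¹) 0 := by
        simpa using (hasDerivAt_id (0 : ℝ)).div_const (d : ℝ)
      have := (hasDerivAt_const (0 : ℝ) ((Real.sqrt 2)⁻¹ • v i)).add (h1.smul_const b)
      rw [zero_add] at this
      exact this
    have := hA.clm_apply hw
    simpa [hG0 i, hu] using this
  have hψ'' : HasDerivAt (deriv ψ)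
      (∑ i, (D (u i) (u i) + fderiv ℝ Q x ((d : ℝ)⁻¹ • b))) 0 := by
    rw [hderivψ]
    exact HasDerivAt.fun_sum (fun i _ => hsum i)
  refine ⟨hψ''.differentiableAt, ?_⟩
  rw [hψ''.deriv]
  -- algebraic identification
  have hsingle : ∀ (w : Fin d → ℝ) (j : Fin d),
      (Pi.single j (w j) : Fin d → ℝ) = w j • (Pi.single j (1:ℝ) : Fin d → ℝ) := by
    intro w j; ext k; by_cases hk : k = j <;> simp [hk, Pi.single_apply]
  have hdecomp : ∀ (w : Fin d → ℝ) (L : (Fin d → ℝ) →L[ℝ] ℝ),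
      L w = ∑ j, w j * L (Pi.single j 1) := by
    intro w L
    conv_lhs => rw [← Finset.univ_sum_single w]
    rw [map_sum]
    exact Finset.sum_congr rfl fun j _ => by rw [hsingle w j, _root_.map_smul, smul_eq_mul]
  have hDapp : ∀ (w : Fin d → ℝ),
      D w w = ∑ j, ∑ k, w j * (w k * D (Pi.single j 1) (Pi.single k 1)) := by
    intro w
    have h1 : D w = ∑ j, w j • D (Pi.single j 1) := by
      conv_lhs => rw [← Finset.univ_sum_single w]
      rw [map_sum]
      exact Finset.sum_congr rfl fun j _ => by rw [hsingle w j, _root_.map_smul]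
    rw [h1, ContinuousLinearMap.sum_apply]
    refine Finset.sum_congr rfl fun j _ => ?_
    rw [ContinuousLinearMap.smul_apply, smul_eq_mul,
      hdecomp w (D (Pi.single j 1)), Finset.mul_sum]
  have hpd2 : ∀ i j, pd2 Q i j x = D (Pi.single j 1) (Pi.single i 1) := by
    intro i j
    have hT : HasFDerivAt
        ((ContinuousLinearMap.apply ℝ ℝ (Pi.single i 1 : Fin d → ℝ)) ∘ (fderiv ℝ Q))
        ((ContinuousLinearMap.apply ℝ ℝ (Pi.single i 1 : Fin d → ℝ)).comp D) x :=
      (ContinuousLinearMap.apply ℝ ℝ (Pi.single i 1 : Fin d → ℝ)).hasFDerivAt.comp x hD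
    have heq : (fun y => fderiv ℝ Q y (Pi.single i 1)) =
        ((ContinuousLinearMap.apply ℝ ℝ (Pi.single i 1 : Fin d → ℝ)) ∘ (fderiv ℝ Q)) := rfl
    rw [pd2, heq, hT.fderiv]
    rfl
  have hpd : ∀ j, pd Q j x = fderiv ℝ Q x (Pi.single j 1) := fun j => rfl
  -- split the sum
  rw [Finset.sum_add_distrib]
  have hterm2 : ∑ _i : Fin d, fderiv ℝ Q x ((d : ℝ)⁻¹ • b) = ∑ j, b j * pd Q j x := by
    rw [Finset.sum_const, Finset.card_univ, Fintype.card_fin, nsmul_eq_mul,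
      _root_.map_smul, smul_eq_mul, ← mul_assoc, mul_inv_cancel₀ (by exact_mod_cast hd.ne' : (d : ℝ) ≠ 0),
      one_mul, hdecomp b (fderiv ℝ Q x)]
    rfl
  have hs2 : (Real.sqrt 2)⁻¹ * (Real.sqrt 2)⁻¹ = (1 : ℝ) / 2 := by
    rw [← mul_inv, Real.mul_self_sqrt (by norm_num : (0:ℝ) ≤ 2)]
    norm_num
  have hterm1 : ∑ i, D (u i) (u i) =
      (1 / 2) * (∑ i, ∑ j, (Φ * Φᵀ) i j * pd2 Q i j x) := by
    have huu : ∀ i, D (u i) (u i) = (1 / 2) * D (v i) (v i) := by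
      intro i
      rw [hu]
      simp only [_root_.map_smul, ContinuousLinearMap.smul_apply, smul_eq_mul]
      rw [← mul_assoc, hs2]
    simp only [huu]
    rw [← Finset.mul_sum]
    congr 1
    -- ∑ i, D (v i) (v i) = ∑ i, ∑ j, (Φ * Φᵀ) i j * pd2 Q i j x
    have hLHS : ∀ i, D (v i) (v i) =
        ∑ j, ∑ k, Φ j i * (Φ k i * D (Pi.single j 1) (Pi.single k 1)) := by
      intro i; rw [hDapp (v i)]
    have hRHS : ∀ i j, (Φ * Φᵀ) i j * pd2 Q i j x =
        ∑ k, Φ i k * Φ j k * D (Pi.single j 1) (Pi.single i 1) := by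
      intro i j
      rw [hpd2, Matrix.mul_apply, Finset.sum_mul]
      exact Finset.sum_congr rfl fun k _ => by rw [Matrix.transpose_apply]
    simp only [hLHS, hRHS]
    -- triple sum reindexing
    rw [Finset.sum_comm]
    refine Finset.sum_congr rfl fun j _ => ?_
    rw [Finset.sum_comm]
    refine Finset.sum_congr rfl fun i _ => Finset.sum_congr rfl fun k _ => ?_
    rw [second_derivative_symmetric (fun y => (hQd y).hasFDerivAt) hD
      (Pi.single j 1) (Pi.single i 1)]
    ring
  rw [hterm1, hterm2]
  ring
end
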